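/- For every term t over {M}, the poset of terms greater than or equal to t in the Mockingbird rewrite order is isomorphic (as a poset) to the poset of duplicative forests greater than or equal to fr(t) in the duplication order, where fr is the forest map defined on terms. -/

import Mathlib

inductive MTerm : Type
  | M : MTerm
  | var : ℕ → MTerm
  | app : MTerm → MTerm → MTerm

/-- One-step rewrite of the Mockingbird system: replace a subterm `M s` by `s s`. -/
inductive MStep : MTerm → MTerm → Prop
  | mock (s : MTerm) : MStep (.app .M s) (.app s s)
  | left {t t' : MTerm} (u : MTerm) : MStep t t' → MStep (.app t u) (.app t' u)
  | right (u : MTerm) {t t' : MTerm} : MStep t t' → MStep (.app u t) (.app u t')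

/-- Rewrite order: reflexive-transitive closure of `MStep`. -/
def MLe : MTerm → MTerm → Prop := Relation.ReflTransGen MStep

/-- A term is a combinator when it contains no variable. -/
def NoVar : MTerm → Prop
  | .M => True
  | .var _ => False
  | .app a b => NoVar a ∧ NoVar b

/-- Subterm (factor) relation. -/
inductive MSub : MTerm → MTerm → Prop
  | refl (t : MTerm) : MSub t t
  | left {s a : MTerm} (b : MTerm) : MSub s a → MSub s (.app a b)
  | right (a : MTerm) {s b : MTerm} : MSub s b → MSub s (.app a b)

/-- Height: maximal number of internal nodes on a root-to-leaf path. -/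
def ht : MTerm → ℕ
  | .M => 0
  | .var _ => 0
  | .app a b => max (ht a) (ht b) + 1

/-- Degree: number of application (internal) nodes. -/
def deg : MTerm → ℕ
  | .M => 0
  | .var _ => 0
  | .app a b => deg a + deg b + 1

mutual
  /-- A duplicative tree: a node colored white (`false`) or black (`true`) with a forest of children. -/
  inductive DTree : Type
    | node : Bool → DForest → DTree
  /-- A duplicative forest: a finite sequence of duplicative trees. -/
  inductive DForest : Type
    | nil : DForest
    | cons : DTree → DForest → DForest
end

def DForest.append : DForest → DForest → DForest
  | .nil, g => g
  | .cons t f, g => .cons t (f.append g)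

mutual
  /-- One duplication step inside a tree. -/
  inductive TStep : DTree → DTree → Prop
    | dup (c : DForest) : TStep (.node false c) (.node true (c.append c))
    | congr (b : Bool) {c c' : DForest} : FStep c c' → TStep (.node b c) (.node b c')
  /-- One duplication step inside a forest. -/
  inductive FStep : DForest → DForest → Prop
    | head {t t' : DTree} (f : DForest) : TStep t t' → FStep (.cons t f) (.cons t' f)
    | tail (t : DTree) {f f' : DForest} : FStep f f' → FStep (.cons t f) (.cons t f')
end

/-- Duplication order on forests. -/
def FLe : DForest → DForest → Prop := Relation.ReflTransGen FStep

mutual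
  /-- Number of black nodes of a tree. -/
  def DTree.black : DTree → ℕ
    | .node b c => (cond b 1 0) + DForest.black c
  /-- Number of black nodes of a forest. -/
  def DForest.black : DForest → ℕ
    | .nil => 0
    | .cons t f => DTree.black t + DForest.black f
end

/-- The forest map from Mockingbird terms to duplicative forests. -/
def fr : MTerm → DForest
  | .var _ => .nil
  | .M => .nil
  | .app .M (.var _) => .cons (.node false .nil) .nil
  | .app .M .M => .nil
  | .app .M (.app t t') => .cons (.node false (fr (.app t t'))) .nil
  | .app (.var _) t => fr t
  | .app (.app t t') t'' => (fr (.app t t')).append (fr t'')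

/-! ### Auxiliary lemmas: term side -/

section TermSide

lemma mstep_app {u v : MTerm} (h : MStep u v) : ∃ x y, v = .app x y := by
  cases h <;> exact ⟨_, _, rfl⟩

/-- Being an application node. -/
def IsApp : MTerm → Prop
  | .app _ _ => True
  | _ => False

lemma isApp_app (x y : MTerm) : IsApp (.app x y) := trivial

lemma mstep_isApp {u v : MTerm} (h : MStep u v) : IsApp v := by
  cases h <;> trivial

lemma mle_isApp {u v : MTerm} (hu : IsApp u) (h : MLe u v) : IsApp v := by
  induction h with
  | refl => exact hu
  | tail _ h2 _ => exact mstep_isApp h2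

lemma mle_M {u : MTerm} (h : MLe .M u) : u = .M := by
  induction h with
  | refl => rfl
  | tail h1 h2 ih => subst ih; cases h2

lemma mle_var {i : ℕ} {u : MTerm} (h : MLe (.var i) u) : u = .var i := by
  induction h with
  | refl => rfl
  | tail h1 h2 ih => subst ih; cases h2

lemma mle_MM {u : MTerm} (h : MLe (.app .M .M) u) : u = .app .M .M := by
  induction h with
  | refl => rfl
  | tail h1 h2 ih =>
    subst ih
    cases h2 with
    | mock => rfl
    | left _ hs => cases hs
    | right _ hs => cases hs

lemma mle_app_left {a a' : MTerm} (b : MTerm) (h : MLe a a') :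
    MLe (.app a b) (.app a' b) :=
  Relation.ReflTransGen.lift (fun x => MTerm.app x b) (fun _ _ hs => MStep.left b hs) _ _ h

lemma mle_app_right (a : MTerm) {b b' : MTerm} (h : MLe b b') :
    MLe (.app a b) (.app a b') :=
  Relation.ReflTransGen.lift (fun x => MTerm.app a x) (fun _ _ hs => MStep.right a hs) _ _ h

lemma mle_app_both {a a' b b' : MTerm} (ha : MLe a a') (hb : MLe b b') :
    MLe (.app a b) (.app a' b') :=
  (mle_app_left b ha).trans (mle_app_right a' hb)

lemma mle_varApp {i : ℕ} {b u : MTerm} (h : MLe (.app (.var i) b) u) :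
    ∃ b', u = .app (.var i) b' ∧ MLe b b' := by
  induction h with
  | refl => exact ⟨b, rfl, .refl⟩
  | tail h1 h2 ih =>
    obtain ⟨b', rfl, hb⟩ := ih
    cases h2 with
    | left _ hs => cases hs
    | right _ hs => exact ⟨_, rfl, hb.tail hs⟩

lemma mle_appApp {a b u : MTerm} (ha : IsApp a) (h : MLe (.app a b) u) :
    ∃ a' b', u = .app a' b' ∧ MLe a a' ∧ MLe b b' := by
  induction h with
  | refl => exact ⟨a, b, rfl, .refl, .refl⟩
  | tail h1 h2 ih =>
    obtain ⟨a', b', rfl, h1a, h1b⟩ := ih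
    cases h2 with
    | mock => exact (mle_isApp ha h1a).elim
    | left _ hs => exact ⟨_, _, rfl, h1a.tail hs, h1b⟩
    | right _ hs => exact ⟨_, _, rfl, h1a, h1b.tail hs⟩

lemma mle_Mapp {b u : MTerm} (hb : IsApp b) (h : MLe (.app .M b) u) :
    (∃ b', u = .app .M b' ∧ MLe b b') ∨
    (∃ b' c d, u = .app c d ∧ IsApp c ∧ MLe b b' ∧ MLe b' c ∧ MLe b' d) := by
  induction h with
  | refl => exact .inl ⟨b, rfl, .refl⟩
  | tail h1 h2 ih =>
    rcases ih with ⟨b', rfl, hbb⟩ | ⟨b', c, d, rfl, hc, h0, h1c, h1d⟩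
    · cases h2 with
      | mock => exact .inr ⟨b', b', b', rfl, mle_isApp hb hbb, hbb, .refl, .refl⟩
      | left _ hs => cases hs
      | right _ hs => exact .inl ⟨_, rfl, hbb.tail hs⟩
    · cases h2 with
      | mock => exact hc.elim
      | left _ hs => exact .inr ⟨b', _, d, rfl, mstep_isApp hs, h0, h1c.tail hs, h1d⟩
      | right _ hs => exact .inr ⟨b', c, _, rfl, hc, h0, h1c, h1d.tail hs⟩

lemma mle_Mvar {i : ℕ} {u : MTerm} (h : MLe (.app .M (.var i)) u) :
    u = .app .M (.var i) ∨ u = .app (.var i) (.var i) := by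
  induction h with
  | refl => exact .inl rfl
  | tail h1 h2 ih =>
    rcases ih with rfl | rfl
    · cases h2 with
      | mock => exact .inr rfl
      | left _ hs => cases hs
      | right _ hs => cases hs
    · cases h2 with
      | left _ hs => cases hs
      | right _ hs => cases hs

/-- white-to-white comparison for `M b`-shaped terms. -/
lemma mle_w_w {bu bv : MTerm} (hbu : IsApp bu) :
    MLe (.app .M bu) (.app .M bv) ↔ MLe bu bv := by
  constructor
  · intro h
    rcases mle_Mapp hbu h with ⟨b', he, hle⟩ | ⟨b', c, d, he, hc, _, _, _⟩
    · cases he; exact hle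
    · cases he; exact hc.elim
  · exact mle_app_right .M

/-- white-to-black comparison. -/
lemma mle_w_b {bu c d : MTerm} (hbu : IsApp bu) (hc : IsApp c) :
    MLe (.app .M bu) (.app c d) ↔ ∃ b', MLe bu b' ∧ MLe b' c ∧ MLe b' d := by
  constructor
  · intro h
    rcases mle_Mapp hbu h with ⟨b', he, hle⟩ | ⟨b', c', d', he, hc', h0, h1, h2⟩
    · cases he; exact hc.elim
    · cases he; exact ⟨b', h0, h1, h2⟩
  · rintro ⟨b', h0, h1, h2⟩
    exact ((mle_app_right .M h0).tail (MStep.mock b')).trans (mle_app_both h1 h2)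

/-- black-to-black comparison. -/
lemma mle_b_b {c d c' d' : MTerm} (hc : IsApp c) :
    MLe (.app c d) (.app c' d') ↔ MLe c c' ∧ MLe d d' := by
  constructor
  · intro h
    obtain ⟨a', b', he, h1, h2⟩ := mle_appApp hc h
    cases he; exact ⟨h1, h2⟩
  · rintro ⟨h1, h2⟩; exact mle_app_both h1 h2

/-- black-to-white is impossible. -/
lemma mle_b_w {c d e : MTerm} (hc : IsApp c) (h : MLe (.app c d) (.app .M e)) : False := by
  obtain ⟨a', b', he, h1, h2⟩ := mle_appApp hc h
  cases he; exact (mle_isApp hc h1).elim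

end TermSide

/-! ### Auxiliary lemmas: forest side -/

section ForestSide

/-- Duplication order on trees. -/
def TLe : DTree → DTree → Prop := Relation.ReflTransGen TStep

/-- Length (number of top-level trees) of a forest. -/
def DForest.len : DForest → ℕ
  | .nil => 0
  | .cons _ f => f.len + 1


/-- Structural induction on forests, treating trees as atoms. -/
def DForest.indOn {motive : DForest → Prop} (f : DForest)
    (nil : motive .nil) (cons : ∀ t f, motive f → motive (.cons t f)) : motive f :=
  match f with
  | .nil => nil
  | .cons t f => cons t f (DForest.indOn f nil cons)

lemma fle_nil {g : DForest} (h : FLe .nil g) : g = .nil := by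
  induction h with
  | refl => rfl
  | tail h1 h2 ih => subst ih; cases h2

lemma fstep_len : ∀ {f g : DForest}, FStep f g → f.len = g.len := by
  intro f
  induction f using DForest.indOn with
  | nil => intro g h; cases h
  | cons t f ih =>
    intro g h
    cases h with
    | head _ ht => rfl
    | tail _ hf => simp [DForest.len, ih hf]

lemma fle_len {f g : DForest} (h : FLe f g) : f.len = g.len := by
  induction h with
  | refl => rfl
  | tail h1 h2 ih => exact ih.trans (fstep_len h2)

lemma append_len : ∀ f g : DForest, (f.append g).len = f.len + g.len := by
  intro f g
  induction f using DForest.indOn with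
  | nil => simp [DForest.append, DForest.len]
  | cons t f ih => simp [DForest.append, DForest.len, ih]; omega

lemma append_inj : ∀ {f1 g1 f2 g2 : DForest}, f1.len = g1.len →
    f1.append f2 = g1.append g2 → f1 = g1 ∧ f2 = g2 := by
  intro f1
  induction f1 using DForest.indOn with
  | nil =>
    intro g1 f2 g2 hlen he
    cases g1 with
    | nil => exact ⟨rfl, he⟩
    | cons t g1 => simp [DForest.len] at hlen
  | cons t f1 ih =>
    intro g1 f2 g2 hlen he
    cases g1 with
    | nil => simp [DForest.len] at hlen
    | cons s g1 =>
      simp only [DForest.append, DForest.cons.injEq] at he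
      simp only [DForest.len] at hlen
      obtain ⟨h1, h2⟩ := ih (by omega) he.2
      exact ⟨by rw [he.1, h1], h2⟩

lemma fstep_append_left : ∀ {f f' : DForest} (g : DForest), FStep f f' →
    FStep (f.append g) (f'.append g) := by
  intro f
  induction f using DForest.indOn with
  | nil => intro f' g h; cases h
  | cons t f ih =>
    intro f' g h
    cases h with
    | head _ ht => exact .head _ ht
    | tail _ hf => exact .tail _ (ih _ hf)

lemma fstep_append_right : ∀ (f : DForest) {g g' : DForest}, FStep g g' →
    FStep (f.append g) (f.append g') := by
  intro f
  induction f using DForest.indOn with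
  | nil => intro g g' h; exact h
  | cons t f ih => intro g g' h; exact .tail _ (ih h)

lemma fle_append_left {f f' : DForest} (g : DForest) (h : FLe f f') :
    FLe (f.append g) (f'.append g) :=
  Relation.ReflTransGen.lift (fun x => DForest.append x g)
    (fun _ _ hs => fstep_append_left g hs) _ _ h

lemma fle_append_right (f : DForest) {g g' : DForest} (h : FLe g g') :
    FLe (f.append g) (f.append g') :=
  Relation.ReflTransGen.lift (fun x => DForest.append f x)
    (fun _ _ hs => fstep_append_right f hs) _ _ h

lemma fle_append_both {f f' g g' : DForest} (hf : FLe f f') (hg : FLe g g') :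
    FLe (f.append g) (f'.append g') :=
  (fle_append_left g hf).trans (fle_append_right f' hg)

lemma fstep_append_cases : ∀ {f g h : DForest}, FStep (f.append g) h →
    (∃ f', h = f'.append g ∧ FStep f f') ∨ (∃ g', h = f.append g' ∧ FStep g g') := by
  intro f
  induction f using DForest.indOn with
  | nil => intro g h hs; exact .inr ⟨h, rfl, hs⟩
  | cons t f ih =>
    intro g h hs
    cases hs with
    | head _ ht => exact .inl ⟨.cons _ f, rfl, .head _ ht⟩
    | tail _ hf =>
      rcases ih hf with ⟨f', rfl, h1⟩ | ⟨g', rfl, h1⟩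
      · exact .inl ⟨.cons t f', rfl, .tail _ h1⟩
      · exact .inr ⟨g', rfl, h1⟩

lemma fle_append {f g h : DForest} (hle : FLe (f.append g) h) :
    ∃ f' g', h = f'.append g' ∧ FLe f f' ∧ FLe g g' := by
  induction hle with
  | refl => exact ⟨f, g, rfl, .refl, .refl⟩
  | tail h1 h2 ih =>
    obtain ⟨f', g', rfl, hf, hg⟩ := ih
    rcases fstep_append_cases h2 with ⟨f'', rfl, hs⟩ | ⟨g'', rfl, hs⟩
    · exact ⟨f'', g', rfl, hf.tail hs, hg⟩
    · exact ⟨f', g'', rfl, hf, hg.tail hs⟩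

/-- `FLe` of appends with matching lengths decomposes componentwise. -/
lemma fle_append_iff {f g f' g' : DForest} (hlen : f.len = f'.len) :
    FLe (f.append g) (f'.append g') ↔ FLe f f' ∧ FLe g g' := by
  constructor
  · intro h
    obtain ⟨f'', g'', he, hf, hg⟩ := fle_append h
    have hl : f''.len = f'.len := by rw [← fle_len hf, hlen]
    obtain ⟨h1, h2⟩ := append_inj hl.symm he
    rw [h1, h2]; exact ⟨hf, hg⟩
  · rintro ⟨h1, h2⟩; exact fle_append_both h1 h2

lemma tle_single {t t' : DTree} (h : TLe t t') :
    FLe (.cons t .nil) (.cons t' .nil) :=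
  Relation.ReflTransGen.lift (fun x => DForest.cons x .nil)
    (fun _ _ hs => FStep.head _ hs) _ _ h

lemma fle_single {t : DTree} {h : DForest} (hle : FLe (.cons t .nil) h) :
    ∃ t', h = .cons t' .nil ∧ TLe t t' := by
  induction hle with
  | refl => exact ⟨t, rfl, .refl⟩
  | tail h1 h2 ih =>
    obtain ⟨t', rfl, htl⟩ := ih
    cases h2 with
    | head _ ht => exact ⟨_, rfl, htl.tail ht⟩
    | tail _ hf => cases hf

lemma tle_congr {c c' : DForest} (b : Bool) (h : FLe c c') :
    TLe (.node b c) (.node b c') :=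
  Relation.ReflTransGen.lift (fun x => DTree.node b x)
    (fun _ _ hs => TStep.congr b hs) _ _ h

lemma tle_black {c : DForest} {t' : DTree} (h : TLe (.node true c) t') :
    ∃ c', t' = .node true c' ∧ FLe c c' := by
  induction h with
  | refl => exact ⟨c, rfl, .refl⟩
  | tail h1 h2 ih =>
    obtain ⟨c', rfl, hc⟩ := ih
    cases h2 with
    | congr _ hf => exact ⟨_, rfl, hc.tail hf⟩

lemma tle_white {c : DForest} {t' : DTree} (h : TLe (.node false c) t') :
    (∃ c', t' = .node false c' ∧ FLe c c') ∨
    (∃ c' d, t' = .node true d ∧ FLe c c' ∧ FLe (c'.append c') d) := by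
  induction h with
  | refl => exact .inl ⟨c, rfl, .refl⟩
  | tail h1 h2 ih =>
    rcases ih with ⟨c', rfl, hc⟩ | ⟨c', d, rfl, hc, hd⟩
    · cases h2 with
      | dup _ => exact .inr ⟨c', _, rfl, hc, .refl⟩
      | congr _ hf => exact .inl ⟨_, rfl, hc.tail hf⟩
    · cases h2 with
      | congr _ hf => exact .inr ⟨c', _, rfl, hc, hd.tail hf⟩

/-- white-to-white comparison for singleton forests. -/
lemma fle_w_w {c c' : DForest} :
    FLe (.cons (.node false c) .nil) (.cons (.node false c') .nil) ↔ FLe c c' := by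
  constructor
  · intro h
    obtain ⟨t', he, ht⟩ := fle_single h
    rcases tle_white ht with ⟨c'', he2, hc⟩ | ⟨c'', d, he2, _, _⟩
    · rw [he2] at he
      cases he; exact hc
    · rw [he2] at he; cases he
  · intro h; exact tle_single (tle_congr false h)

/-- white-to-black comparison for singleton forests. -/
lemma fle_w_b {c d : DForest} :
    FLe (.cons (.node false c) .nil) (.cons (.node true d) .nil) ↔
    ∃ c', FLe c c' ∧ FLe (c'.append c') d := by
  constructor
  · intro h
    obtain ⟨t', he, ht⟩ := fle_single h
    rcases tle_white ht with ⟨c'', he2, _⟩ | ⟨c'', d', he2, hc, hd⟩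
    · rw [he2] at he; cases he
    · rw [he2] at he; cases he; exact ⟨c'', hc, hd⟩
  · rintro ⟨c', h1, h2⟩
    refine tle_single ?_
    exact ((tle_congr false h1).tail (TStep.dup c')).trans (tle_congr true h2)

/-- black-to-black comparison for singleton forests. -/
lemma fle_b_b {c d : DForest} :
    FLe (.cons (.node true c) .nil) (.cons (.node true d) .nil) ↔ FLe c d := by
  constructor
  · intro h
    obtain ⟨t', he, ht⟩ := fle_single h
    obtain ⟨c', he2, hc⟩ := tle_black ht
    rw [he2] at he; cases he; exact hc
  · intro h; exact tle_single (tle_congr true h)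

/-- black-to-white is impossible. -/
lemma fle_b_w {c d : DForest}
    (h : FLe (.cons (.node true c) .nil) (.cons (.node false d) .nil)) : False := by
  obtain ⟨t', he, ht⟩ := fle_single h
  obtain ⟨c', he2, _⟩ := tle_black ht
  rw [he2] at he; cases he

end ForestSide

/-! ### The main construction -/

section Main

/-- The statement proved by induction on `t`. -/
def GoodT (t : MTerm) : Prop :=
  ∃ e : {u : MTerm // MLe t u} ≃ {g : DForest // FLe (fr t) g},
    ∀ a b : {u : MTerm // MLe t u}, MLe a.1 b.1 ↔ FLe (e a).1 (e b).1

/-- Total version of an upper-set map. -/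
noncomputable def totalize (b : MTerm)
    (φ : {u : MTerm // MLe b u} → {g : DForest // FLe (fr b) g}) (x : MTerm) : DForest :=
  @dite _ (MLe b x) (Classical.dec _) (fun h => (φ ⟨x, h⟩).1) (fun _ => .nil)

lemma totalize_pos (b : MTerm) (φ : {u : MTerm // MLe b u} → {g : DForest // FLe (fr b) g})
    {x : MTerm} (h : MLe b x) : totalize b φ x = (φ ⟨x, h⟩).1 := by
  unfold totalize; exact dif_pos h

lemma totalize_eta (b : MTerm) (φ : {u : MTerm // MLe b u} → {g : DForest // FLe (fr b) g})
    (x : {u : MTerm // MLe b u}) : totalize b φ x.1 = (φ x).1 :=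
  totalize_pos b φ x.2

lemma totalize_mem (b : MTerm) (φ : {u : MTerm // MLe b u} → {g : DForest // FLe (fr b) g})
    {x : MTerm} (h : MLe b x) : FLe (fr b) (totalize b φ x) := by
  rw [totalize_pos b φ h]; exact (φ _).2

lemma totalize_len (b : MTerm) (φ : {u : MTerm // MLe b u} → {g : DForest // FLe (fr b) g})
    {x : MTerm} (h : MLe b x) : (totalize b φ x).len = (fr b).len :=
  (fle_len (totalize_mem b φ h)).symm

/-- Singleton upper sets give the isomorphism trivially. -/
lemma good_singleton {t : MTerm} (h1 : ∀ u, MLe t u → u = t)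
    (h2 : ∀ g, FLe (fr t) g → g = fr t) : GoodT t := by
  refine ⟨⟨fun _ => ⟨fr t, .refl⟩, fun _ => ⟨t, .refl⟩, ?_, ?_⟩, ?_⟩
  · intro u; exact Subtype.ext (h1 u.1 u.2).symm
  · intro g; exact Subtype.ext (h2 g.1 g.2).symm
  · intro a b
    have ha := h1 a.1 a.2; have hb := h1 b.1 b.2
    constructor
    · intro _; exact Relation.ReflTransGen.refl
    · intro _; rw [ha, hb]; exact Relation.ReflTransGen.refl

/-- Left and right components of an application. -/
def ltp : MTerm → MTerm
  | .app x _ => x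
  | t => t

def rtp : MTerm → MTerm
  | .app _ y => y
  | t => t

/-- Case `t = (var i) b`. -/
lemma good_var (i : ℕ) (b : MTerm) (IH : GoodT b) : GoodT (.app (.var i) b) := by
  obtain ⟨φ, hφ⟩ := IH
  have key : ∀ u : {u : MTerm // MLe (.app (.var i) b) u}, MLe b (rtp u.1) := by
    intro u
    obtain ⟨b', he, hb⟩ := mle_varApp u.2
    rw [he]; exact hb
  have lemE : ∀ u : {u : MTerm // MLe (.app (.var i) b) u},
      MTerm.app (.var i) (rtp u.1) = u.1 := by
    intro u
    obtain ⟨b', he, hb⟩ := mle_varApp u.2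
    rw [he]
    rfl
  let E : {u : MTerm // MLe (.app (.var i) b) u} ≃ {u : MTerm // MLe b u} :=
    ⟨fun u => ⟨rtp u.1, key u⟩,
      fun x => ⟨.app (.var i) x.1, mle_app_right _ x.2⟩,
      fun u => Subtype.ext (lemE u),
      fun x => Subtype.ext rfl⟩
  refine ⟨E.trans φ, fun u v => Iff.trans ?_ (hφ (E u) (E v))⟩
  obtain ⟨bu, heu, hbu⟩ := mle_varApp u.2
  obtain ⟨bv, hev, hbv⟩ := mle_varApp v.2
  show MLe u.1 v.1 ↔ MLe (rtp u.1) (rtp v.1)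
  rw [heu, hev]
  constructor
  · intro h
    obtain ⟨b'', he2, hb2⟩ := mle_varApp h
    injection he2 with _ h2
    show MLe bu bv
    exact h2 ▸ hb2
  · intro h
    exact mle_app_right _ h

/-- Case `t = (a1 a2) b`. -/
lemma good_app (a1 a2 b : MTerm) (IHa : GoodT (.app a1 a2)) (IHb : GoodT b) :
    GoodT (.app (.app a1 a2) b) := by
  obtain ⟨ψ, hψ⟩ := IHa
  obtain ⟨φ, hφ⟩ := IHb
  have hfr : fr (.app (.app a1 a2) b) = (fr (.app a1 a2)).append (fr b) := rfl
  have mem : ∀ u : MTerm, MLe (.app (.app a1 a2) b) u →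
      FLe (fr (.app (.app a1 a2) b))
        ((totalize (.app a1 a2) ψ (ltp u)).append (totalize b φ (rtp u))) := by
    intro u hu
    obtain ⟨a', b', rfl, h1, h2⟩ := mle_appApp (isApp_app _ _) hu
    rw [hfr]
    exact fle_append_both (totalize_mem _ ψ h1) (totalize_mem _ φ h2)
  let F : {u : MTerm // MLe (.app (.app a1 a2) b) u} →
      {g : DForest // FLe (fr (.app (.app a1 a2) b)) g} :=
    fun u => ⟨(totalize (.app a1 a2) ψ (ltp u.1)).append (totalize b φ (rtp u.1)),
      mem u.1 u.2⟩
  have hinj : Function.Injective F := by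
    rintro ⟨u, hu⟩ ⟨v, hv⟩ h
    obtain ⟨au, bu, rfl, hu1, hu2⟩ := mle_appApp (isApp_app _ _) hu
    obtain ⟨av, bv, rfl, hv1, hv2⟩ := mle_appApp (isApp_app _ _) hv
    have h' : (totalize (.app a1 a2) ψ au).append (totalize b φ bu)
        = (totalize (.app a1 a2) ψ av).append (totalize b φ bv) := congrArg Subtype.val h
    obtain ⟨e1, e2⟩ := append_inj (by rw [totalize_len _ ψ hu1, totalize_len _ ψ hv1]) h'
    rw [totalize_pos _ ψ hu1, totalize_pos _ ψ hv1] at e1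
    rw [totalize_pos _ φ hu2, totalize_pos _ φ hv2] at e2
    have e1' := congrArg Subtype.val (ψ.injective (Subtype.ext e1))
    have e2' := congrArg Subtype.val (φ.injective (Subtype.ext e2))
    apply Subtype.ext
    show MTerm.app au bu = .app av bv
    rw [show au = av from e1', show bu = bv from e2']
  have hsurj : Function.Surjective F := by
    rintro ⟨g, hg⟩
    rw [hfr] at hg
    obtain ⟨ga, gb, rfl, h1, h2⟩ := fle_append hg
    obtain ⟨xa, hxa⟩ := ψ.surjective ⟨ga, h1⟩
    obtain ⟨xb, hxb⟩ := φ.surjective ⟨gb, h2⟩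
    refine ⟨⟨.app xa.1 xb.1, mle_app_both xa.2 xb.2⟩, ?_⟩
    apply Subtype.ext
    show (totalize (.app a1 a2) ψ xa.1).append (totalize b φ xb.1) = ga.append gb
    rw [totalize_eta, totalize_eta, hxa, hxb]
  refine ⟨Equiv.ofBijective F ⟨hinj, hsurj⟩, ?_⟩
  rintro ⟨u, hu⟩ ⟨v, hv⟩
  obtain ⟨au, bu, rfl, hu1, hu2⟩ := mle_appApp (isApp_app _ _) hu
  obtain ⟨av, bv, rfl, hv1, hv2⟩ := mle_appApp (isApp_app _ _) hv
  show MLe (.app au bu) (.app av bv) ↔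
    FLe ((totalize (.app a1 a2) ψ au).append (totalize b φ bu))
        ((totalize (.app a1 a2) ψ av).append (totalize b φ bv))
  rw [mle_b_b (mle_isApp (isApp_app _ _) hu1),
    fle_append_iff (by rw [totalize_len _ ψ hu1, totalize_len _ ψ hv1]),
    totalize_pos _ ψ hu1, totalize_pos _ ψ hv1, totalize_pos _ φ hu2, totalize_pos _ φ hv2]
  exact and_congr (hψ ⟨au, hu1⟩ ⟨av, hv1⟩) (hφ ⟨bu, hu2⟩ ⟨bv, hv2⟩)

/-- The forest map used in the case `t = M b` with `b` an application. -/
noncomputable def mMap (b : MTerm)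
    (φ : {u : MTerm // MLe b u} → {g : DForest // FLe (fr b) g}) : MTerm → DForest
  | .app .M y => .cons (.node false (totalize b φ y)) .nil
  | .app x y => .cons (.node true ((totalize b φ x).append (totalize b φ y))) .nil
  | _ => .nil

lemma mMap_white (b : MTerm) (φ : {u : MTerm // MLe b u} → {g : DForest // FLe (fr b) g})
    (y : MTerm) : mMap b φ (.app .M y) = .cons (.node false (totalize b φ y)) .nil := rfl

lemma mMap_black (b : MTerm) (φ : {u : MTerm // MLe b u} → {g : DForest // FLe (fr b) g})
    {x : MTerm} (hx : IsApp x) (y : MTerm) :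
    mMap b φ (.app x y) =
      .cons (.node true ((totalize b φ x).append (totalize b φ y))) .nil := by
  cases x with
  | M => exact hx.elim
  | var j => rfl
  | app p q => rfl

/-- Case `t = M (b1 b2)`. -/
lemma good_M (b1 b2 : MTerm) (IH : GoodT (.app b1 b2)) : GoodT (.app .M (.app b1 b2)) := by
  obtain ⟨φ, hφ⟩ := IH
  have hfr : fr (.app .M (.app b1 b2)) = .cons (.node false (fr (.app b1 b2))) .nil := rfl
  have mem : ∀ u : MTerm, MLe (.app .M (.app b1 b2)) u →
      FLe (fr (.app .M (.app b1 b2))) (mMap (.app b1 b2) φ u) := by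
    intro u hu
    rcases mle_Mapp (isApp_app _ _) hu with ⟨b', rfl, hbb⟩ | ⟨b', c, d, rfl, hc, h0, h1, h2⟩
    · rw [hfr, mMap_white]
      exact fle_w_w.mpr (totalize_mem _ φ hbb)
    · rw [hfr, mMap_black _ φ hc]
      refine fle_w_b.mpr ⟨(φ ⟨b', h0⟩).1, (φ _).2, fle_append_both ?_ ?_⟩
      · rw [totalize_pos _ φ (h0.trans h1)]
        exact (hφ ⟨b', h0⟩ ⟨c, h0.trans h1⟩).mp h1
      · rw [totalize_pos _ φ (h0.trans h2)]
        exact (hφ ⟨b', h0⟩ ⟨d, h0.trans h2⟩).mp h2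
  let F : {u : MTerm // MLe (.app .M (.app b1 b2)) u} →
      {g : DForest // FLe (fr (.app .M (.app b1 b2))) g} :=
    fun u => ⟨mMap (.app b1 b2) φ u.1, mem u.1 u.2⟩
  have hinj : Function.Injective F := by
    rintro ⟨u, hu⟩ ⟨v, hv⟩ h
    have h' : mMap (.app b1 b2) φ u = mMap (.app b1 b2) φ v := congrArg Subtype.val h
    rcases mle_Mapp (isApp_app _ _) hu with ⟨bu, rfl, hbu⟩ |
        ⟨bu', cu, du, rfl, hcu, hu0, hu1, hu2⟩ <;>
      rcases mle_Mapp (isApp_app _ _) hv with ⟨bv, rfl, hbv⟩ |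
        ⟨bv', cv, dv, rfl, hcv, hv0, hv1, hv2⟩
    · rw [mMap_white, mMap_white] at h'
      injection h' with i1 _
      injection i1 with _ j2
      rw [totalize_pos _ φ hbu, totalize_pos _ φ hbv] at j2
      have e := congrArg Subtype.val (φ.injective (Subtype.ext j2))
      apply Subtype.ext
      show MTerm.app .M bu = .app .M bv
      rw [show bu = bv from e]
    · rw [mMap_white, mMap_black _ φ hcv] at h'
      injection h' with i1 _
      injection i1 with j1 _
      exact Bool.noConfusion j1
    · rw [mMap_black _ φ hcu, mMap_white] at h'
      injection h' with i1 _
      injection i1 with j1 _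
      exact Bool.noConfusion j1
    · rw [mMap_black _ φ hcu, mMap_black _ φ hcv] at h'
      injection h' with i1 _
      injection i1 with _ j2
      obtain ⟨e1, e2⟩ := append_inj
        (by rw [totalize_len _ φ (hu0.trans hu1), totalize_len _ φ (hv0.trans hv1)]) j2
      rw [totalize_pos _ φ (hu0.trans hu1), totalize_pos _ φ (hv0.trans hv1)] at e1
      rw [totalize_pos _ φ (hu0.trans hu2), totalize_pos _ φ (hv0.trans hv2)] at e2
      have e1' := congrArg Subtype.val (φ.injective (Subtype.ext e1))
      have e2' := congrArg Subtype.val (φ.injective (Subtype.ext e2))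
      apply Subtype.ext
      show MTerm.app cu du = .app cv dv
      rw [show cu = cv from e1', show du = dv from e2']
  have hsurj : Function.Surjective F := by
    rintro ⟨g, hg⟩
    rw [hfr] at hg
    obtain ⟨t', rfl, ht⟩ := fle_single hg
    rcases tle_white ht with ⟨c', rfl, hc⟩ | ⟨c', d, rfl, hc, hd⟩
    · obtain ⟨x, hx⟩ := φ.surjective ⟨c', hc⟩
      refine ⟨⟨.app .M x.1, mle_app_right _ x.2⟩, ?_⟩
      apply Subtype.ext
      show mMap (.app b1 b2) φ (.app .M x.1) = _
      rw [mMap_white, totalize_eta, hx]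
    · obtain ⟨g1, g2, rfl, k1, k2⟩ := fle_append hd
      obtain ⟨xm, hxm⟩ := φ.surjective ⟨c', hc⟩
      obtain ⟨x1, hx1⟩ := φ.surjective ⟨g1, hc.trans k1⟩
      obtain ⟨x2, hx2⟩ := φ.surjective ⟨g2, hc.trans k2⟩
      have hap : IsApp x1.1 := mle_isApp (isApp_app _ _) x1.2
      refine ⟨⟨.app x1.1 x2.1, ?_⟩, ?_⟩
      · refine (mle_w_b (isApp_app _ _) hap).mpr ⟨xm.1, xm.2, ?_, ?_⟩
        · exact (hφ xm x1).mpr (by rw [hxm, hx1]; exact k1)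
        · exact (hφ xm x2).mpr (by rw [hxm, hx2]; exact k2)
      · apply Subtype.ext
        show mMap (.app b1 b2) φ (.app x1.1 x2.1) = _
        rw [mMap_black _ φ hap, totalize_eta, totalize_eta, hx1, hx2]
  refine ⟨Equiv.ofBijective F ⟨hinj, hsurj⟩, ?_⟩
  rintro ⟨u, hu⟩ ⟨v, hv⟩
  rcases mle_Mapp (isApp_app _ _) hu with ⟨bu, rfl, hbu⟩ |
      ⟨bu', cu, du, rfl, hcu, hu0, hu1, hu2⟩ <;>
    rcases mle_Mapp (isApp_app _ _) hv with ⟨bv, rfl, hbv⟩ |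
      ⟨bv', cv, dv, rfl, hcv, hv0, hv1, hv2⟩
  · show MLe (.app .M bu) (.app .M bv) ↔
      FLe (mMap (.app b1 b2) φ (.app .M bu)) (mMap (.app b1 b2) φ (.app .M bv))
    rw [mMap_white, mMap_white, fle_w_w, totalize_pos _ φ hbu, totalize_pos _ φ hbv,
      mle_w_w (mle_isApp (isApp_app _ _) hbu)]
    exact hφ ⟨bu, hbu⟩ ⟨bv, hbv⟩
  · show MLe (.app .M bu) (.app cv dv) ↔
      FLe (mMap (.app b1 b2) φ (.app .M bu)) (mMap (.app b1 b2) φ (.app cv dv))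
    rw [mMap_white, mMap_black _ φ hcv, fle_w_b,
      mle_w_b (mle_isApp (isApp_app _ _) hbu) hcv, totalize_pos _ φ hbu]
    constructor
    · rintro ⟨b', h0, h1, h2⟩
      refine ⟨(φ ⟨b', hbu.trans h0⟩).1,
        (hφ ⟨bu, hbu⟩ ⟨b', hbu.trans h0⟩).mp h0, fle_append_both ?_ ?_⟩
      · rw [totalize_pos _ φ (hv0.trans hv1)]
        exact (hφ ⟨b', hbu.trans h0⟩ ⟨cv, hv0.trans hv1⟩).mp h1
      · rw [totalize_pos _ φ (hv0.trans hv2)]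
        exact (hφ ⟨b', hbu.trans h0⟩ ⟨dv, hv0.trans hv2⟩).mp h2
    · rintro ⟨c', k1, k2⟩
      have hcm : FLe (fr (.app b1 b2)) c' := (φ ⟨bu, hbu⟩).2.trans k1
      obtain ⟨x, hx⟩ := φ.surjective ⟨c', hcm⟩
      obtain ⟨g1, g2, he, m1, m2⟩ := fle_append k2
      have hlen : (totalize (.app b1 b2) φ cv).len = g1.len := by
        rw [totalize_len _ φ (hv0.trans hv1), ← fle_len m1]
        exact fle_len hcm
      obtain ⟨e1, e2⟩ := append_inj hlen he
      refine ⟨x.1, (hφ ⟨bu, hbu⟩ x).mpr (by rw [hx]; exact k1), ?_, ?_⟩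
      · exact (hφ x ⟨cv, hv0.trans hv1⟩).mpr
          (by rw [hx, ← totalize_pos _ φ (hv0.trans hv1), e1]; exact m1)
      · exact (hφ x ⟨dv, hv0.trans hv2⟩).mpr
          (by rw [hx, ← totalize_pos _ φ (hv0.trans hv2), e2]; exact m2)
  · show MLe (.app cu du) (.app .M bv) ↔
      FLe (mMap (.app b1 b2) φ (.app cu du)) (mMap (.app b1 b2) φ (.app .M bv))
    rw [mMap_black _ φ hcu, mMap_white]
    exact iff_of_false (fun h => mle_b_w hcu h) (fun h => fle_b_w h)
  · show MLe (.app cu du) (.app cv dv) ↔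
      FLe (mMap (.app b1 b2) φ (.app cu du)) (mMap (.app b1 b2) φ (.app cv dv))
    rw [mMap_black _ φ hcu, mMap_black _ φ hcv, mle_b_b hcu, fle_b_b,
      fle_append_iff (by rw [totalize_len _ φ (hu0.trans hu1),
        totalize_len _ φ (hv0.trans hv1)]),
      totalize_pos _ φ (hu0.trans hu1), totalize_pos _ φ (hv0.trans hv1),
      totalize_pos _ φ (hu0.trans hu2), totalize_pos _ φ (hv0.trans hv2)]
    exact and_congr (hφ ⟨cu, hu0.trans hu1⟩ ⟨cv, hv0.trans hv1⟩)
      (hφ ⟨du, hu0.trans hu2⟩ ⟨dv, hv0.trans hv2⟩)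

/-- The forest map used in the case `t = M (var i)`. -/
def mvarMap : MTerm → DForest
  | .app .M _ => .cons (.node false .nil) .nil
  | _ => .cons (.node true .nil) .nil

/-- Case `t = M (var i)`. -/
lemma good_Mvar (i : ℕ) : GoodT (.app .M (.var i)) := by
  have hfr : fr (.app .M (.var i)) = .cons (.node false .nil) .nil := rfl
  have fcls : ∀ g : DForest, FLe (fr (.app .M (.var i))) g →
      g = .cons (.node false .nil) .nil ∨ g = .cons (.node true .nil) .nil := by
    intro g hg
    rw [hfr] at hg
    obtain ⟨t', rfl, ht⟩ := fle_single hg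
    rcases tle_white ht with ⟨c', rfl, hc⟩ | ⟨c', d, rfl, hc, hd⟩
    · rw [fle_nil hc]; exact .inl rfl
    · rw [fle_nil hc] at hd
      rw [fle_nil hd]; exact .inr rfl
  have mem : ∀ u : MTerm, MLe (.app .M (.var i)) u →
      FLe (fr (.app .M (.var i))) (mvarMap u) := by
    intro u hu
    rcases mle_Mvar hu with rfl | rfl
    · exact Relation.ReflTransGen.refl
    · rw [hfr]
      show FLe _ (.cons (.node true .nil) .nil)
      exact fle_w_b.mpr ⟨.nil, .refl, .refl⟩
  let F : {u : MTerm // MLe (.app .M (.var i)) u} →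
      {g : DForest // FLe (fr (.app .M (.var i))) g} :=
    fun u => ⟨mvarMap u.1, mem u.1 u.2⟩
  have hinj : Function.Injective F := by
    rintro ⟨u, hu⟩ ⟨v, hv⟩ h
    have h' : mvarMap u = mvarMap v := congrArg Subtype.val h
    rcases mle_Mvar hu with rfl | rfl <;> rcases mle_Mvar hv with rfl | rfl
    · exact Subtype.ext rfl
    · injection h' with i1 _
      injection i1 with j1 _
      exact Bool.noConfusion j1
    · injection h' with i1 _
      injection i1 with j1 _
      exact Bool.noConfusion j1
    · exact Subtype.ext rfl
  have hsurj : Function.Surjective F := by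
    rintro ⟨g, hg⟩
    rcases fcls g hg with rfl | rfl
    · exact ⟨⟨.app .M (.var i), .refl⟩, Subtype.ext rfl⟩
    · exact ⟨⟨.app (.var i) (.var i), Relation.ReflTransGen.single (MStep.mock _)⟩,
        Subtype.ext rfl⟩
  refine ⟨Equiv.ofBijective F ⟨hinj, hsurj⟩, ?_⟩
  rintro ⟨u, hu⟩ ⟨v, hv⟩
  rcases mle_Mvar hu with rfl | rfl <;> rcases mle_Mvar hv with rfl | rfl
  · exact iff_of_true Relation.ReflTransGen.refl Relation.ReflTransGen.refl
  · exact iff_of_true (Relation.ReflTransGen.single (MStep.mock _))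
      (fle_w_b.mpr ⟨.nil, .refl, .refl⟩)
  · refine iff_of_false ?_ ?_
    · intro h
      obtain ⟨b', he, _⟩ := mle_varApp h
      injection he with e1 _
      exact MTerm.noConfusion e1
    · intro h
      exact fle_b_w h
  · exact iff_of_true Relation.ReflTransGen.refl Relation.ReflTransGen.refl

/-- All terms are good. -/
theorem good_all : ∀ t : MTerm, GoodT t := by
  intro t
  induction t with
  | M => exact good_singleton (fun u h => mle_M h) (fun g h => fle_nil h)
  | var i => exact good_singleton (fun u h => mle_var h) (fun g h => fle_nil h)
  | app a b iha ihb =>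
    cases a with
    | var i => exact good_var i b ihb
    | app a1 a2 => exact good_app a1 a2 b iha ihb
    | M =>
      cases b with
      | M => exact good_singleton (fun u h => mle_MM h) (fun g h => fle_nil h)
      | var i => exact good_Mvar i
      | app b1 b2 => exact good_M b1 b2 ihb

end Main

/-- For every term t over {M}, the poset of terms above t in the Mockingbird rewrite
order is isomorphic to the poset of duplicative forests above fr(t) in the duplication
order. -/
theorem mockingbird_forest_iso (t : MTerm) :
    ∃ e : {u : MTerm // MLe t u} ≃ {g : DForest // FLe (fr t) g},
      ∀ a b : {u : MTerm // MLe t u}, MLe a.1 b.1 ↔ FLe (e a).1 (e b).1 := by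
  exact good_all t
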